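/- Let k be an uncountable field and a ∈ k[[u,v]] a formal power series. Suppose that for every λ ∈ k, the image of a under the substitution u ↦ λv in k[[v]] is a polynomial (i.e., lies in k[v]). Then a itself is a polynomial, i.e., a ∈ k[u,v]. -/

import Mathlib

/-- `IsSubstHom l φ` says that the `k`-algebra homomorphism
`φ : k[[u,v]] → k[[v]]` is "the" substitution homomorphism `u ↦ l·v, v ↦ v`:
it sends `u = X 0` to `l·v`, `v = X 1` to `v`, and it is continuous for the
adic topologies, i.e. it maps the `n`-th power of the maximal ideal `(u, v)`
into the `n`-th power of `(v)` for every `n`. These conditions determine `φ`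
uniquely. -/
def IsSubstHom {k : Type*} [Field k] (l : k)
    (φ : MvPowerSeries (Fin 2) k →ₐ[k] PowerSeries k) : Prop :=
  φ (MvPowerSeries.X 0) = PowerSeries.C l * PowerSeries.X ∧
  φ (MvPowerSeries.X 1) = PowerSeries.X ∧
  ∀ (n : ℕ) (f : MvPowerSeries (Fin 2) k),
    f ∈ (Ideal.span {MvPowerSeries.X 0, MvPowerSeries.X 1} :
        Ideal (MvPowerSeries (Fin 2) k)) ^ n →
      φ f ∈ (Ideal.span {PowerSeries.X} : Ideal (PowerSeries k)) ^ n

open Finset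

namespace SubstAux

variable {k : Type*} [Field k]

noncomputable def E (p : ℕ × ℕ) : Fin 2 →₀ ℕ := Finsupp.single 0 p.1 + Finsupp.single 1 p.2

lemma E_apply0 (p : ℕ × ℕ) : E p 0 = p.1 := by simp [E]
lemma E_apply1 (p : ℕ × ℕ) : E p 1 = p.2 := by simp [E, Finsupp.single_apply]

lemma E_eq_self (d : Fin 2 →₀ ℕ) : E (d 0, d 1) = d := by
  ext i
  fin_cases i <;> simp [E_apply0, E_apply1]

lemma E_inj {p q : ℕ × ℕ} (h : E p = E q) : p = q := by
  have h0 := congrArg (fun f : Fin 2 →₀ ℕ => f 0) h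
  have h1 := congrArg (fun f : Fin 2 →₀ ℕ => f 1) h
  simp only [E_apply0, E_apply1] at h0 h1
  exact Prod.ext h0 h1

lemma E_eq_zero_iff {p : ℕ × ℕ} : E p = 0 ↔ p = 0 := by
  constructor
  · intro hp
    have h0 : E (0, 0) = 0 := by ext i; fin_cases i <;> simp [E]
    exact E_inj (hp.trans h0.symm)
  · rintro rfl; ext i; fin_cases i <;> simp [E]

/-- The substitution `u ↦ l·v, v ↦ v` as a bare function. -/
noncomputable def substFun (l : k) (f : MvPowerSeries (Fin 2) k) : PowerSeries k :=
  PowerSeries.mk fun n =>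
    ∑ p ∈ antidiagonal n, l ^ p.1 * MvPowerSeries.coeff (E p) f

lemma coeff_substFun (l : k) (f : MvPowerSeries (Fin 2) k) (n : ℕ) :
    PowerSeries.coeff n (substFun l f) =
      ∑ p ∈ antidiagonal n, l ^ p.1 * MvPowerSeries.coeff (E p) f := by
  simp [substFun]

lemma substFun_C (l : k) (c : k) :
    substFun l (MvPowerSeries.C c) = PowerSeries.C c := by
  ext n
  rw [coeff_substFun, PowerSeries.coeff_C]
  rcases Nat.eq_zero_or_pos n with rfl | hn
  · rw [if_pos rfl]
    rw [show antidiagonal 0 = {((0 : ℕ), (0 : ℕ))} from rfl]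
    rw [Finset.sum_singleton]
    simp [MvPowerSeries.coeff_C, E_eq_zero_iff]
  · rw [if_neg (by omega), Finset.sum_eq_zero]
    intro p hp
    rw [HasAntidiagonal.mem_antidiagonal] at hp
    rw [MvPowerSeries.coeff_C, if_neg, mul_zero]
    rw [E_eq_zero_iff]
    intro h
    rw [Prod.ext_iff] at h
    simp only [Prod.fst_zero, Prod.snd_zero] at h
    omega

lemma substFun_one (l : k) : substFun l (1 : MvPowerSeries (Fin 2) k) = 1 := by
  have := substFun_C l (1 : k)
  simpa using this

lemma substFun_mul (l : k) (f g : MvPowerSeries (Fin 2) k) :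
    substFun l (f * g) = substFun l f * substFun l g := by
  ext n
  rw [coeff_substFun, PowerSeries.coeff_mul]
  have step : ∀ p : ℕ × ℕ,
      (PowerSeries.coeff p.1) (substFun l f) * (PowerSeries.coeff p.2) (substFun l g)
        = ∑ z ∈ antidiagonal p.1 ×ˢ antidiagonal p.2,
            (l ^ z.1.1 * MvPowerSeries.coeff (E z.1) f) *
            (l ^ z.2.1 * MvPowerSeries.coeff (E z.2) g) := by
    intro p
    rw [coeff_substFun, coeff_substFun, Finset.sum_mul_sum, Finset.sum_product]
  rw [Finset.sum_congr rfl fun p _ => step p]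
  simp only [MvPowerSeries.coeff_mul, Finset.mul_sum]
  rw [Finset.sum_sigma', Finset.sum_sigma']
  refine Finset.sum_nbij'
    (i := fun y => ⟨(y.2.1 0 + y.2.1 1, y.2.2 0 + y.2.2 1),
      ((y.2.1 0, y.2.1 1), (y.2.2 0, y.2.2 1))⟩)
    (j := fun x => ⟨(x.2.1.1 + x.2.2.1, x.2.1.2 + x.2.2.2), (E x.2.1, E x.2.2)⟩)
    ?_ ?_ ?_ ?_ ?_
  · intro y hy
    simp only [Finset.mem_sigma, HasAntidiagonal.mem_antidiagonal] at hy
    obtain ⟨hp, hde⟩ := hy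
    have h0 : y.2.1 0 + y.2.2 0 = y.1.1 := by
      have := congrArg (fun f : Fin 2 →₀ ℕ => f 0) hde
      simpa [E_apply0] using this
    have h1 : y.2.1 1 + y.2.2 1 = y.1.2 := by
      have := congrArg (fun f : Fin 2 →₀ ℕ => f 1) hde
      simpa [E_apply1] using this
    simp only [Finset.mem_sigma, HasAntidiagonal.mem_antidiagonal, Finset.mem_product]
    exact ⟨by omega, trivial, trivial⟩
  · intro x hx
    simp only [Finset.mem_sigma, HasAntidiagonal.mem_antidiagonal, Finset.mem_product] at hx
    obtain ⟨hab, hq, hr⟩ := hx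
    simp only [Finset.mem_sigma, HasAntidiagonal.mem_antidiagonal]
    constructor
    · omega
    · ext i
      fin_cases i <;> simp [E, Finsupp.single_apply]
  · intro y hy
    simp only [Finset.mem_sigma, HasAntidiagonal.mem_antidiagonal] at hy
    obtain ⟨hp, hde⟩ := hy
    have h0 : y.2.1 0 + y.2.2 0 = y.1.1 := by
      have := congrArg (fun f : Fin 2 →₀ ℕ => f 0) hde
      simpa [E_apply0] using this
    have h1 : y.2.1 1 + y.2.2 1 = y.1.2 := by
      have := congrArg (fun f : Fin 2 →₀ ℕ => f 1) hde
      simpa [E_apply1] using this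
    refine Sigma.ext ?_ ?_
    · simp only [E_apply0, E_apply1]
      rw [Prod.ext_iff]
      refine ⟨by simp; omega, by simp; omega⟩
    · rw [heq_eq_eq, Prod.ext_iff]
      exact ⟨E_eq_self y.2.1, E_eq_self y.2.2⟩
  · intro x hx
    simp only [Finset.mem_sigma, HasAntidiagonal.mem_antidiagonal, Finset.mem_product] at hx
    obtain ⟨hab, hq, hr⟩ := hx
    refine Sigma.ext ?_ ?_
    · simp only [E_apply0, E_apply1]
      rw [Prod.ext_iff]
      refine ⟨by simp; omega, by simp; omega⟩
    · rw [heq_eq_eq, Prod.ext_iff]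
      constructor <;> · rw [Prod.ext_iff]; exact ⟨by simp [E_apply0], by simp [E_apply1]⟩
  · intro y hy
    simp only [Finset.mem_sigma, HasAntidiagonal.mem_antidiagonal] at hy
    obtain ⟨hp, hde⟩ := hy
    have h0 : y.2.1 0 + y.2.2 0 = y.1.1 := by
      have := congrArg (fun f : Fin 2 →₀ ℕ => f 0) hde
      simpa [E_apply0] using this
    simp only [E_eq_self]
    rw [← h0, pow_add]
    ring

end SubstAux

namespace SubstAux

variable {k : Type*} [Field k]

/-- The substitution `u ↦ l·v, v ↦ v` as an algebra homomorphism. -/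
noncomputable def substHom (l : k) : MvPowerSeries (Fin 2) k →ₐ[k] PowerSeries k where
  toFun := substFun l
  map_one' := substFun_one l
  map_mul' := substFun_mul l
  map_zero' := by ext n; simp [coeff_substFun]
  map_add' := by
    intro x y
    ext n
    simp [coeff_substFun, mul_add, Finset.sum_add_distrib]
  commutes' := by
    intro c
    show substFun l (algebraMap k (MvPowerSeries (Fin 2) k) c) = _
    rw [← MvPowerSeries.c_eq_algebraMap, substFun_C]
    rfl

lemma single_zero_eq : (Finsupp.single (0 : Fin 2) 1) = E (1, 0) := by
  ext i; fin_cases i <;> simp [E, Finsupp.single_apply]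

lemma single_one_eq : (Finsupp.single (1 : Fin 2) 1) = E (0, 1) := by
  ext i; fin_cases i <;> simp [E, Finsupp.single_apply]

lemma substFun_X0 (l : k) :
    substFun l (MvPowerSeries.X (0 : Fin 2)) = PowerSeries.C l * PowerSeries.X := by
  ext n
  rw [coeff_substFun, PowerSeries.coeff_C_mul, PowerSeries.coeff_X]
  rcases eq_or_ne n 1 with rfl | hn
  · rw [if_pos rfl, mul_one, Finset.sum_eq_single_of_mem ((1 : ℕ), (0 : ℕ))
      (by simp)]
    · rw [MvPowerSeries.coeff_X, single_zero_eq, if_pos rfl]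
      simp
    · intro p hp hne
      rw [MvPowerSeries.coeff_X, single_zero_eq, if_neg (fun hEq => hne (E_inj hEq)),
        mul_zero]
  · rw [if_neg hn, mul_zero, Finset.sum_eq_zero]
    intro p hp
    rw [HasAntidiagonal.mem_antidiagonal] at hp
    rw [MvPowerSeries.coeff_X, single_zero_eq, if_neg, mul_zero]
    intro hEq
    have := E_inj hEq
    apply hn
    rw [this] at hp
    simpa using hp.symm

lemma substFun_X1 (l : k) :
    substFun l (MvPowerSeries.X (1 : Fin 2)) = PowerSeries.X := by
  ext n
  rw [coeff_substFun, PowerSeries.coeff_X]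
  rcases eq_or_ne n 1 with rfl | hn
  · rw [if_pos rfl, Finset.sum_eq_single_of_mem ((0 : ℕ), (1 : ℕ))
      (by simp)]
    · rw [MvPowerSeries.coeff_X, single_one_eq, if_pos rfl]
      simp
    · intro p hp hne
      rw [MvPowerSeries.coeff_X, single_one_eq, if_neg (fun hEq => hne (E_inj hEq)),
        mul_zero]
  · rw [if_neg hn, Finset.sum_eq_zero]
    intro p hp
    rw [HasAntidiagonal.mem_antidiagonal] at hp
    rw [MvPowerSeries.coeff_X, single_one_eq, if_neg, mul_zero]
    intro hEq
    have := E_inj hEq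
    apply hn
    rw [this] at hp
    simpa using hp.symm

lemma coeff_eq_zero_of_mem_pow {n : ℕ} {f : MvPowerSeries (Fin 2) k}
    (hf : f ∈ (Ideal.span {MvPowerSeries.X 0, MvPowerSeries.X 1} :
      Ideal (MvPowerSeries (Fin 2) k)) ^ n)
    {d : Fin 2 →₀ ℕ} (hd : d 0 + d 1 < n) : MvPowerSeries.coeff d f = 0 := by
  induction n generalizing f d with
  | zero => omega
  | succ n ih =>
    rw [pow_succ] at hf
    suffices hkey : ∀ d : Fin 2 →₀ ℕ, d 0 + d 1 < n + 1 →
        MvPowerSeries.coeff d f = 0 from hkey d hd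
    refine Submodule.mul_induction_on
      (C := fun r => ∀ d : Fin 2 →₀ ℕ, d 0 + d 1 < n + 1 →
        MvPowerSeries.coeff d r = 0) hf ?_ ?_
    · intro x hx y hy d hd
      rw [MvPowerSeries.coeff_mul]
      apply Finset.sum_eq_zero
      intro z hz
      rw [HasAntidiagonal.mem_antidiagonal] at hz
      by_cases hz2 : z.2 = 0
      · have hy0 : MvPowerSeries.coeff (0 : Fin 2 →₀ ℕ) y = 0 := by
          obtain ⟨a, b, rfl⟩ := Ideal.mem_span_pair.mp hy
          simp [MvPowerSeries.coeff_zero_eq_constantCoeff, MvPowerSeries.constantCoeff_X]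
        rw [hz2, hy0, mul_zero]
      · have hz20 : 1 ≤ z.2 0 + z.2 1 := by
          by_contra hc
          push_neg at hc
          apply hz2
          ext i
          fin_cases i <;> simp <;> omega
        have h0 : z.1 0 + z.2 0 = d 0 := by
          have := congrArg (fun f : Fin 2 →₀ ℕ => f 0) hz
          simpa using this
        have h1 : z.1 1 + z.2 1 = d 1 := by
          have := congrArg (fun f : Fin 2 →₀ ℕ => f 1) hz
          simpa using this
        rw [ih hx (by omega), zero_mul]
    · intro x y hx hy d hd
      rw [map_add, hx d hd, hy d hd, add_zero]

lemma substHom_isSubstHom (l : k) : IsSubstHom l (substHom l) := by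
  refine ⟨substFun_X0 l, substFun_X1 l, ?_⟩
  intro n f hf
  rw [Ideal.span_singleton_pow, Ideal.mem_span_singleton, PowerSeries.X_pow_dvd_iff]
  intro m hm
  show PowerSeries.coeff m (substFun l f) = 0
  rw [coeff_substFun]
  apply Finset.sum_eq_zero
  intro p hp
  rw [HasAntidiagonal.mem_antidiagonal] at hp
  rw [coeff_eq_zero_of_mem_pow hf (by rw [E_apply0, E_apply1]; omega), mul_zero]

end SubstAux


open SubstAux Finset

/-- Let `k` be an uncountable field and `a ∈ k[[u,v]]`. If for every `λ ∈ k` the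
image of `a` under the substitution `u ↦ λ·v` is a polynomial in `k[v]`, then `a`
is a polynomial in `k[u,v]`. -/
theorem polynomial_of_all_substitutions_polynomial
    {k : Type*} [Field k] [Uncountable k] (a : MvPowerSeries (Fin 2) k)
    (h : ∀ (l : k) (φ : MvPowerSeries (Fin 2) k →ₐ[k] PowerSeries k),
      IsSubstHom l φ → ∃ p : Polynomial k, φ a = (p : PowerSeries k)) :
    ∃ q : MvPolynomial (Fin 2) k, a = (q : MvPowerSeries (Fin 2) k) := by
    classical
  set P : ℕ → Polynomial k := fun n =>
    ∑ p ∈ antidiagonal n,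
      Polynomial.C (MvPowerSeries.coeff (E p) a) * Polynomial.X ^ p.1 with hP
  have hPeval : ∀ (l : k) (n : ℕ),
      (P n).eval l = PowerSeries.coeff n (substFun l a) := by
    intro l n
    rw [coeff_substFun, hP, Polynomial.eval_finset_sum]
    refine Finset.sum_congr rfl fun p _ => ?_
    rw [Polynomial.eval_mul, Polynomial.eval_C, Polynomial.eval_pow, Polynomial.eval_X,
      mul_comm]
  have key : ∀ l : k, ∃ N : ℕ, ∀ n : ℕ, N < n → (P n).eval l = 0 := by
    intro l
    obtain ⟨p, hp⟩ := h l (substHom l) (substHom_isSubstHom l)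
    refine ⟨p.natDegree, fun n hn => ?_⟩
    rw [hPeval]
    have h2 : PowerSeries.coeff n (substHom l a) = p.coeff n := by
      rw [hp, Polynomial.coeff_coe]
    rw [show substFun l a = substHom l a from rfl, h2,
      Polynomial.coeff_eq_zero_of_natDegree_lt hn]
  choose N hN using key
  obtain ⟨M, hM⟩ : ∃ M : ℕ, {l : k | N l = M}.Infinite := by
    by_contra hc
    push_neg at hc
    have hcount : (Set.univ : Set k).Countable := by
      have hU : (⋃ M : ℕ, {l : k | N l = M}) = Set.univ := by
        ext l; simp
      rw [← hU]
      exact Set.countable_iUnion fun M => (hc M).countable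
    exact Set.not_countable_univ hcount
  have hvanish : ∀ n : ℕ, M < n → P n = 0 := by
    intro n hn
    apply Polynomial.eq_zero_of_infinite_isRoot
    apply hM.mono
    intro l hl
    simp only [Set.mem_setOf_eq] at hl ⊢
    exact hN l n (by omega)
  have hcoeff : ∀ d : Fin 2 →₀ ℕ, M < d 0 + d 1 → MvPowerSeries.coeff d a = 0 := by
    intro d hd
    have h1 : (P (d 0 + d 1)).coeff (d 0) = MvPowerSeries.coeff d a := by
      rw [hP]
      rw [Polynomial.finset_sum_coeff]
      rw [Finset.sum_eq_single ((d 0, d 1) : ℕ × ℕ)]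
      · rw [Polynomial.coeff_C_mul, Polynomial.coeff_X_pow, if_pos rfl, mul_one, E_eq_self]
      · intro p hp hne
        rw [HasAntidiagonal.mem_antidiagonal] at hp
        rw [Polynomial.coeff_C_mul, Polynomial.coeff_X_pow, if_neg, mul_zero]
        intro hq
        apply hne
        rw [Prod.ext_iff]
        constructor
        · simpa using hq.symm
        · simp only []
          omega
      · intro hmem
        exact absurd (by rw [HasAntidiagonal.mem_antidiagonal]) hmem
    rw [← h1, hvanish _ hd, Polynomial.coeff_zero]
  refine ⟨MvPowerSeries.trunc k (E (M + 1, M + 1)) a, ?_⟩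
  ext d
  rw [MvPolynomial.coeff_coe, MvPowerSeries.coeff_trunc]
  split_ifs with hlt
  · rfl
  · apply hcoeff
    by_contra hc
    push_neg at hc
    apply hlt
    have hle : d ≤ E (M + 1, M + 1) := by
      rw [Finsupp.le_def]
      intro i
      fin_cases i
      · show d 0 ≤ E (M + 1, M + 1) 0
        rw [E_apply0]
        omega
      · show d 1 ≤ E (M + 1, M + 1) 1
        rw [E_apply1]
        omega
    have hne : d ≠ E (M + 1, M + 1) := by
      intro hEq
      have h0 := congrArg (fun f : Fin 2 →₀ ℕ => f 0) hEq
      simp only [E_apply0] at h0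
      omega
    exact lt_of_le_of_ne hle hne
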